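/- Let p₁, p₂ ∈ ℂ with p₁ + p₂ ≠ 0 and p₁² − p₁p₂ + p₂² = 0, and set k = p₁ + p₂ (k ≠ 0). Define τ(x₁, x₋₁) = 1 + e^{k x₁ + (3/k) x₋₁ + η₀} for a constant η₀, assuming all quantities real with k real nonzero. Then τ satisfies the bilinear equation (D_{x₋₁} D_{x₁}³ − 3 D_{x₁}²) τ·τ = 0. -/
import Mathlib


/-- Partial derivative with respect to the first variable (x₁). -/
noncomputable def pd1 (f : ℝ → ℝ → ℝ) : ℝ → ℝ → ℝ :=
  fun x y => deriv (fun s => f s y) x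

/-- Partial derivative with respect to the second variable (x₋₁). -/
noncomputable def pd2 (f : ℝ → ℝ → ℝ) : ℝ → ℝ → ℝ :=
  fun x y => deriv (fun s => f x s) y

private lemma dexpm (m a b x : ℝ) :
    deriv (fun s => m * Real.exp (a * s + b)) x = m * (a * Real.exp (a * x + b)) := by
  have h : HasDerivAt (fun s : ℝ => a * s + b) a x :=
    by simpa using ((hasDerivAt_id x).const_mul a).add_const b
  have h2 : HasDerivAt (fun s => m * Real.exp (a * s + b))
      (m * (Real.exp (a * x + b) * a)) x :=
    (((Real.hasDerivAt_exp _).comp x h)).const_mul m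
  rw [h2.deriv]; ring

private lemma dexpm2 (m a b c x : ℝ) :
    deriv (fun s => m * Real.exp (b + (a * s + c))) x
      = m * (a * Real.exp (b + (a * x + c))) := by
  have h : HasDerivAt (fun s : ℝ => b + (a * s + c)) a x :=
    by simpa using (((hasDerivAt_id x).const_mul a).add_const c).const_add b
  have h2 : HasDerivAt (fun s => m * Real.exp (b + (a * s + c)))
      (m * (Real.exp (b + (a * x + c)) * a)) x :=
    (((Real.hasDerivAt_exp _).comp x h)).const_mul m
  rw [h2.deriv]; ring

/-- one-soliton τ-function of the reduced Ostrovsky equation. -/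
theorem stmt_14 (p q : ℂ) (hpq : p + q ≠ 0)
    (hcon : p ^ 2 - p * q + q ^ 2 = 0)
    (k : ℝ) (hk : (k : ℂ) = p + q) (hk0 : k ≠ 0)
    (η₀ : ℝ) (τ : ℝ → ℝ → ℝ)
    (hτ : τ = fun x y => 1 + Real.exp (k * x + (3 / k) * y + η₀)) :
    ∀ x y,
      2 * (pd2 (pd1 (pd1 (pd1 τ))) x y * τ x y
            - 3 * pd2 (pd1 (pd1 τ)) x y * pd1 τ x y
            + 3 * pd2 (pd1 τ) x y * pd1 (pd1 τ) x y
            - pd2 τ x y * pd1 (pd1 (pd1 τ)) x y)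
        - 3 * (2 * (pd1 (pd1 τ) x y * τ x y - (pd1 τ x y) ^ 2)) = 0 := by
  subst hτ
  have h1 : pd1 (fun x y => 1 + Real.exp (k * x + (3 / k) * y + η₀))
      = fun x y => k * Real.exp (k * x + ((3 / k) * y + η₀)) := by
    funext x y
    simp only [pd1, add_assoc, deriv_const_add]
    simpa using dexpm 1 k ((3 / k) * y + η₀) x
  have h2 : pd1 (fun x y => k * Real.exp (k * x + ((3 / k) * y + η₀)))
      = fun x y => k ^ 2 * Real.exp (k * x + ((3 / k) * y + η₀)) := by
    funext x y
    simp only [pd1]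
    rw [dexpm]; ring
  have h3 : pd1 (fun x y => k ^ 2 * Real.exp (k * x + ((3 / k) * y + η₀)))
      = fun x y => k ^ 3 * Real.exp (k * x + ((3 / k) * y + η₀)) := by
    funext x y
    simp only [pd1]
    rw [dexpm]; ring
  intro x y
  rw [h1, h2, h3]
  have g0 : pd2 (fun x y => 1 + Real.exp (k * x + (3 / k) * y + η₀)) x y
      = (3 / k) * Real.exp (k * x + ((3 / k) * y + η₀)) := by
    simp only [pd2, add_assoc, deriv_const_add]
    simpa using dexpm2 1 (3 / k) (k * x) η₀ y
  have g1 : pd2 (fun x y => k * Real.exp (k * x + ((3 / k) * y + η₀))) x y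
      = k * ((3 / k) * Real.exp (k * x + ((3 / k) * y + η₀))) := by
    simp only [pd2]
    rw [dexpm2]
  have g2 : pd2 (fun x y => k ^ 2 * Real.exp (k * x + ((3 / k) * y + η₀))) x y
      = k ^ 2 * ((3 / k) * Real.exp (k * x + ((3 / k) * y + η₀))) := by
    simp only [pd2]
    rw [dexpm2]
  have g3 : pd2 (fun x y => k ^ 3 * Real.exp (k * x + ((3 / k) * y + η₀))) x y
      = k ^ 3 * ((3 / k) * Real.exp (k * x + ((3 / k) * y + η₀))) := by
    simp only [pd2]
    rw [dexpm2]
  rw [g0, g1, g2, g3]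
  simp only [add_assoc]
  set E := Real.exp (k * x + ((3 / k) * y + η₀)) with hE
  field_simp
  ring
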